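/- arXiv:1409.6859 — 2 statements merged into one kernel-verified Lean document; each statement's English description precedes it below -/
import Mathlib

section
/- Let f = 1 + e^{η₁} + e^{η₂} + e^{η₁+η₂+A₁₂}, where ηⱼ = μⱼx + νⱼy + κⱼz + ϖⱼt + γⱼ, ϖⱼ = −3μⱼκⱼ/νⱼ + μⱼ³ (νⱼ ≠ 0), and e^{A₁₂} = −[(ν₁−ν₂)(ϖ₁−ϖ₂) − (μ₁−μ₂)³(ν₁−ν₂) + 3(μ₁−μ₂)(κ₁−κ₂)] / [(ν₁+ν₂)(ϖ₁+ϖ₂) − (μ₁+μ₂)³(ν₁+ν₂) + 3(μ₁+μ₂)(κ₁+κ₂)] (assuming the denominator is nonzero). Then f satisfies the bilinear equation (D_y D_t − D_x^3 D_y + 3 D_x D_z) f·f = 0. -/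
open Complex

/-- `(∂_x - ∂_{x'})` acting on a function of `(x,y,z,t,x',y',z',t')`. -/
noncomputable def Dx (F : ℂ → ℂ → ℂ → ℂ → ℂ → ℂ → ℂ → ℂ → ℂ) :
    ℂ → ℂ → ℂ → ℂ → ℂ → ℂ → ℂ → ℂ → ℂ :=
  fun x y z t x' y' z' t' =>
    deriv (fun s => F s y z t x' y' z' t') x - deriv (fun s => F x y z t s y' z' t') x'

/-- `(∂_y - ∂_{y'})`. -/
noncomputable def Dy (F : ℂ → ℂ → ℂ → ℂ → ℂ → ℂ → ℂ → ℂ → ℂ) :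
    ℂ → ℂ → ℂ → ℂ → ℂ → ℂ → ℂ → ℂ → ℂ :=
  fun x y z t x' y' z' t' =>
    deriv (fun s => F x s z t x' y' z' t') y - deriv (fun s => F x y z t x' s z' t') y'

/-- `(∂_z - ∂_{z'})`. -/
noncomputable def Dz (F : ℂ → ℂ → ℂ → ℂ → ℂ → ℂ → ℂ → ℂ → ℂ) :
    ℂ → ℂ → ℂ → ℂ → ℂ → ℂ → ℂ → ℂ → ℂ :=
  fun x y z t x' y' z' t' =>
    deriv (fun s => F x y s t x' y' z' t') z - deriv (fun s => F x y z t x' y' s t') z'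

/-- `(∂_t - ∂_{t'})`. -/
noncomputable def Dt (F : ℂ → ℂ → ℂ → ℂ → ℂ → ℂ → ℂ → ℂ → ℂ) :
    ℂ → ℂ → ℂ → ℂ → ℂ → ℂ → ℂ → ℂ → ℂ :=
  fun x y z t x' y' z' t' =>
    deriv (fun s => F x y z s x' y' z' t') t - deriv (fun s => F x y z t x' y' z' s) t'

/-- The Hirota bilinear operator `D_x^m D_y^n D_z^p D_t^k f·g` evaluated at `(x,y,z,t)`. -/
noncomputable def hirota (m n p k : ℕ) (f g : ℂ → ℂ → ℂ → ℂ → ℂ) (x y z t : ℂ) : ℂ :=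
  (Dx^[m] (Dy^[n] (Dz^[p] (Dt^[k]
    (fun x y z t x' y' z' t' => f x y z t * g x' y' z' t'))))) x y z t x y z t


noncomputable def esum {ι : Type} [Fintype ι] (C a b c d a' b' c' d' g : ι → ℂ) :
    ℂ → ℂ → ℂ → ℂ → ℂ → ℂ → ℂ → ℂ → ℂ :=
  fun x y z t x' y' z' t' => ∑ i, C i * Complex.exp
    (a i * x + b i * y + c i * z + d i * t + a' i * x' + b' i * y' + c' i * z' + d' i * t' + g i)

lemma hd_aux {L : ℂ → ℂ} {k : ℂ} (c x : ℂ) (h : HasDerivAt L k x) :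
    HasDerivAt (fun s => c * Complex.exp (L s)) (k * c * Complex.exp (L x)) x := by
  have := (h.cexp).const_mul c
  rw [show k * c * Complex.exp (L x) = c * (Complex.exp (L x) * k) by ring]
  exact this

lemma Dx_esum {ι : Type} [Fintype ι] (C a b c d a' b' c' d' g : ι → ℂ) :
    Dx (esum C a b c d a' b' c' d' g)
      = esum (fun i => (a i - a' i) * C i) a b c d a' b' c' d' g := by
  funext x y z t x' y' z' t'
  simp only [Dx, esum]
  have h1 : HasDerivAt (fun s => ∑ i, C i * Complex.exp
      (a i * s + b i * y + c i * z + d i * t + a' i * x' + b' i * y' + c' i * z' + d' i * t' + g i))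
      (∑ i, (a i * 1) * C i * Complex.exp
      (a i * x + b i * y + c i * z + d i * t + a' i * x' + b' i * y' + c' i * z' + d' i * t' + g i)) x := by
    apply HasDerivAt.fun_sum
    intro i _
    exact hd_aux _ _ ((hasDerivAt_id x).const_mul (a i) |>.add_const _ |>.add_const _ |>.add_const _ |>.add_const _ |>.add_const _ |>.add_const _ |>.add_const _ |>.add_const _)
  have h2 : HasDerivAt (fun s => ∑ i, C i * Complex.exp
      (a i * x + b i * y + c i * z + d i * t + a' i * s + b' i * y' + c' i * z' + d' i * t' + g i))
      (∑ i, (a' i * 1) * C i * Complex.exp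
      (a i * x + b i * y + c i * z + d i * t + a' i * x' + b' i * y' + c' i * z' + d' i * t' + g i)) x' := by
    apply HasDerivAt.fun_sum
    intro i _
    exact hd_aux _ _ ((hasDerivAt_id x').const_mul (a' i) |>.const_add _ |>.add_const _ |>.add_const _ |>.add_const _ |>.add_const _)
  rw [h1.deriv, h2.deriv, ← Finset.sum_sub_distrib]
  exact Finset.sum_congr rfl fun i _ => by ring

lemma Dy_esum {ι : Type} [Fintype ι] (C a b c d a' b' c' d' g : ι → ℂ) :
    Dy (esum C a b c d a' b' c' d' g)
      = esum (fun i => (b i - b' i) * C i) a b c d a' b' c' d' g := by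
  funext x y z t x' y' z' t'
  simp only [Dy, esum]
  have h1 : HasDerivAt (fun s => ∑ i, C i * Complex.exp
      (a i * x + b i * s + c i * z + d i * t + a' i * x' + b' i * y' + c' i * z' + d' i * t' + g i))
      (∑ i, (b i * 1) * C i * Complex.exp
      (a i * x + b i * y + c i * z + d i * t + a' i * x' + b' i * y' + c' i * z' + d' i * t' + g i)) y := by
    apply HasDerivAt.fun_sum
    intro i _
    exact hd_aux _ _ ((hasDerivAt_id y).const_mul (b i) |>.const_add _ |>.add_const _ |>.add_const _ |>.add_const _ |>.add_const _ |>.add_const _ |>.add_const _ |>.add_const _)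
  have h2 : HasDerivAt (fun s => ∑ i, C i * Complex.exp
      (a i * x + b i * y + c i * z + d i * t + a' i * x' + b' i * s + c' i * z' + d' i * t' + g i))
      (∑ i, (b' i * 1) * C i * Complex.exp
      (a i * x + b i * y + c i * z + d i * t + a' i * x' + b' i * y' + c' i * z' + d' i * t' + g i)) y' := by
    apply HasDerivAt.fun_sum
    intro i _
    exact hd_aux _ _ ((hasDerivAt_id y').const_mul (b' i) |>.const_add _ |>.add_const _ |>.add_const _ |>.add_const _)
  rw [h1.deriv, h2.deriv, ← Finset.sum_sub_distrib]
  exact Finset.sum_congr rfl fun i _ => by ring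

lemma Dz_esum {ι : Type} [Fintype ι] (C a b c d a' b' c' d' g : ι → ℂ) :
    Dz (esum C a b c d a' b' c' d' g)
      = esum (fun i => (c i - c' i) * C i) a b c d a' b' c' d' g := by
  funext x y z t x' y' z' t'
  simp only [Dz, esum]
  have h1 : HasDerivAt (fun s => ∑ i, C i * Complex.exp
      (a i * x + b i * y + c i * s + d i * t + a' i * x' + b' i * y' + c' i * z' + d' i * t' + g i))
      (∑ i, (c i * 1) * C i * Complex.exp
      (a i * x + b i * y + c i * z + d i * t + a' i * x' + b' i * y' + c' i * z' + d' i * t' + g i)) z := by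
    apply HasDerivAt.fun_sum
    intro i _
    exact hd_aux _ _ ((hasDerivAt_id z).const_mul (c i) |>.const_add _ |>.add_const _ |>.add_const _ |>.add_const _ |>.add_const _ |>.add_const _ |>.add_const _)
  have h2 : HasDerivAt (fun s => ∑ i, C i * Complex.exp
      (a i * x + b i * y + c i * z + d i * t + a' i * x' + b' i * y' + c' i * s + d' i * t' + g i))
      (∑ i, (c' i * 1) * C i * Complex.exp
      (a i * x + b i * y + c i * z + d i * t + a' i * x' + b' i * y' + c' i * z' + d' i * t' + g i)) z' := by
    apply HasDerivAt.fun_sum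
    intro i _
    exact hd_aux _ _ ((hasDerivAt_id z').const_mul (c' i) |>.const_add _ |>.add_const _ |>.add_const _)
  rw [h1.deriv, h2.deriv, ← Finset.sum_sub_distrib]
  exact Finset.sum_congr rfl fun i _ => by ring

lemma Dt_esum {ι : Type} [Fintype ι] (C a b c d a' b' c' d' g : ι → ℂ) :
    Dt (esum C a b c d a' b' c' d' g)
      = esum (fun i => (d i - d' i) * C i) a b c d a' b' c' d' g := by
  funext x y z t x' y' z' t'
  simp only [Dt, esum]
  have h1 : HasDerivAt (fun s => ∑ i, C i * Complex.exp
      (a i * x + b i * y + c i * z + d i * s + a' i * x' + b' i * y' + c' i * z' + d' i * t' + g i))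
      (∑ i, (d i * 1) * C i * Complex.exp
      (a i * x + b i * y + c i * z + d i * t + a' i * x' + b' i * y' + c' i * z' + d' i * t' + g i)) t := by
    apply HasDerivAt.fun_sum
    intro i _
    exact hd_aux _ _ ((hasDerivAt_id t).const_mul (d i) |>.const_add _ |>.add_const _ |>.add_const _ |>.add_const _ |>.add_const _ |>.add_const _)
  have h2 : HasDerivAt (fun s => ∑ i, C i * Complex.exp
      (a i * x + b i * y + c i * z + d i * t + a' i * x' + b' i * y' + c' i * z' + d' i * s + g i))
      (∑ i, (d' i * 1) * C i * Complex.exp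
      (a i * x + b i * y + c i * z + d i * t + a' i * x' + b' i * y' + c' i * z' + d' i * t' + g i)) t' := by
    apply HasDerivAt.fun_sum
    intro i _
    exact hd_aux _ _ ((hasDerivAt_id t').const_mul (d' i) |>.const_add _ |>.add_const _)
  rw [h1.deriv, h2.deriv, ← Finset.sum_sub_distrib]
  exact Finset.sum_congr rfl fun i _ => by ring

/-- The two-soliton tau function `f = 1 + e^{η₁} + e^{η₂} + e^{η₁+η₂+A₁₂}` satisfies the
bilinear equation `(D_y D_t - D_x^3 D_y + 3 D_x D_z) f·f = 0`, where `e^{A₁₂}` is the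
interaction coefficient and `ϖⱼ = -3μⱼκⱼ/νⱼ + μⱼ³`. -/
theorem two_soliton_bilinear (μ₁ μ₂ ν₁ ν₂ κ₁ κ₂ γ₁ γ₂ ϖ₁ ϖ₂ E : ℂ)
    (hν₁ : ν₁ ≠ 0) (hν₂ : ν₂ ≠ 0)
    (hϖ₁ : ϖ₁ = -3 * μ₁ * κ₁ / ν₁ + μ₁ ^ 3)
    (hϖ₂ : ϖ₂ = -3 * μ₂ * κ₂ / ν₂ + μ₂ ^ 3)
    (hden : (ν₁ + ν₂) * (ϖ₁ + ϖ₂) - (μ₁ + μ₂) ^ 3 * (ν₁ + ν₂)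
      + 3 * (μ₁ + μ₂) * (κ₁ + κ₂) ≠ 0)
    (hE : E = -(((ν₁ - ν₂) * (ϖ₁ - ϖ₂) - (μ₁ - μ₂) ^ 3 * (ν₁ - ν₂)
        + 3 * (μ₁ - μ₂) * (κ₁ - κ₂)) /
      ((ν₁ + ν₂) * (ϖ₁ + ϖ₂) - (μ₁ + μ₂) ^ 3 * (ν₁ + ν₂)
        + 3 * (μ₁ + μ₂) * (κ₁ + κ₂))))
    (f : ℂ → ℂ → ℂ → ℂ → ℂ)
    (hf : f = fun x y z t =>
      1 + Complex.exp (μ₁ * x + ν₁ * y + κ₁ * z + ϖ₁ * t + γ₁)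
        + Complex.exp (μ₂ * x + ν₂ * y + κ₂ * z + ϖ₂ * t + γ₂)
        + E * Complex.exp ((μ₁ * x + ν₁ * y + κ₁ * z + ϖ₁ * t + γ₁)
            + (μ₂ * x + ν₂ * y + κ₂ * z + ϖ₂ * t + γ₂))) :
    ∀ x y z t : ℂ,
      hirota 0 1 0 1 f f x y z t - hirota 3 1 0 0 f f x y z t
        + 3 * hirota 1 0 1 0 f f x y z t = 0 := by
  intro x y z t
  have key1 : ν₁ * ϖ₁ - μ₁ ^ 3 * ν₁ + 3 * μ₁ * κ₁ = 0 := by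
    rw [hϖ₁]; field_simp; ring
  have key2 : ν₂ * ϖ₂ - μ₂ ^ 3 * ν₂ + 3 * μ₂ * κ₂ = 0 := by
    rw [hϖ₂]; field_simp; ring
  have key3 : E * ((ν₁ + ν₂) * (ϖ₁ + ϖ₂) - (μ₁ + μ₂) ^ 3 * (ν₁ + ν₂)
      + 3 * (μ₁ + μ₂) * (κ₁ + κ₂))
      + ((ν₁ - ν₂) * (ϖ₁ - ϖ₂) - (μ₁ - μ₂) ^ 3 * (ν₁ - ν₂)
      + 3 * (μ₁ - μ₂) * (κ₁ - κ₂)) = 0 := by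
    rw [hE, neg_mul, div_mul_cancel₀ _ hden]; ring
  have hFe : (fun x y z t x' y' z' t' => f x y z t * f x' y' z' t')
      = esum (ι := Fin 4 × Fin 4)
        (fun p => (![1, 1, 1, E] : Fin 4 → ℂ) p.1 * (![1, 1, 1, E] : Fin 4 → ℂ) p.2)
        (fun p => (![0, μ₁, μ₂, μ₁ + μ₂] : Fin 4 → ℂ) p.1)
        (fun p => (![0, ν₁, ν₂, ν₁ + ν₂] : Fin 4 → ℂ) p.1)
        (fun p => (![0, κ₁, κ₂, κ₁ + κ₂] : Fin 4 → ℂ) p.1)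
        (fun p => (![0, ϖ₁, ϖ₂, ϖ₁ + ϖ₂] : Fin 4 → ℂ) p.1)
        (fun p => (![0, μ₁, μ₂, μ₁ + μ₂] : Fin 4 → ℂ) p.2)
        (fun p => (![0, ν₁, ν₂, ν₁ + ν₂] : Fin 4 → ℂ) p.2)
        (fun p => (![0, κ₁, κ₂, κ₁ + κ₂] : Fin 4 → ℂ) p.2)
        (fun p => (![0, ϖ₁, ϖ₂, ϖ₁ + ϖ₂] : Fin 4 → ℂ) p.2)
        (fun p => (![0, γ₁, γ₂, γ₁ + γ₂] : Fin 4 → ℂ) p.1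
          + (![0, γ₁, γ₂, γ₁ + γ₂] : Fin 4 → ℂ) p.2) := by
    rw [hf]
    funext X Y Z T X' Y' Z' T'
    simp only [esum]
    rw [Fintype.sum_prod_type]
    simp only [Fin.sum_univ_four, Matrix.cons_val_zero, Matrix.cons_val_one,
      Matrix.head_cons, Matrix.cons_val_two, Matrix.tail_cons, Matrix.cons_val_three]
    simp only [add_mul, zero_mul, zero_add, add_zero, one_mul, Complex.exp_add,
      Complex.exp_zero]
    ring
  simp only [hirota, hFe, Function.iterate_succ_apply', Function.iterate_zero_apply,
    Dt_esum, Dy_esum, Dz_esum, Dx_esum]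
  simp only [esum]
  rw [show (Finset.univ : Finset (Fin 4 × Fin 4)).sum = (Finset.univ : Finset (Fin 4 × Fin 4)).sum from rfl]
  simp only [Fintype.sum_prod_type, Fin.sum_univ_four, Matrix.cons_val_zero,
    Matrix.cons_val_one, Matrix.head_cons, Matrix.cons_val_two, Matrix.tail_cons,
    Matrix.cons_val_three]
  simp only [add_mul, zero_mul, zero_add, add_zero, one_mul, mul_one, mul_zero,
    sub_self, sub_zero, zero_sub, Complex.exp_add, Complex.exp_zero]
  linear_combination
    (2 * Complex.exp (μ₁*x) * Complex.exp (ν₁*y) * Complex.exp (κ₁*z) * Complex.exp (ϖ₁*t) * Complex.exp γ₁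
      + 2 * E * Complex.exp (μ₁*x) * Complex.exp (ν₁*y) * Complex.exp (κ₁*z) * Complex.exp (ϖ₁*t) * Complex.exp γ₁
        * (Complex.exp (μ₂*x) * Complex.exp (ν₂*y) * Complex.exp (κ₂*z) * Complex.exp (ϖ₂*t) * Complex.exp γ₂) ^ 2) * key1
    + (2 * Complex.exp (μ₂*x) * Complex.exp (ν₂*y) * Complex.exp (κ₂*z) * Complex.exp (ϖ₂*t) * Complex.exp γ₂
      + 2 * E * Complex.exp (μ₂*x) * Complex.exp (ν₂*y) * Complex.exp (κ₂*z) * Complex.exp (ϖ₂*t) * Complex.exp γ₂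
        * (Complex.exp (μ₁*x) * Complex.exp (ν₁*y) * Complex.exp (κ₁*z) * Complex.exp (ϖ₁*t) * Complex.exp γ₁) ^ 2) * key2
    + (2 * Complex.exp (μ₁*x) * Complex.exp (ν₁*y) * Complex.exp (κ₁*z) * Complex.exp (ϖ₁*t) * Complex.exp γ₁
        * Complex.exp (μ₂*x) * Complex.exp (ν₂*y) * Complex.exp (κ₂*z) * Complex.exp (ϖ₂*t) * Complex.exp γ₂) * key3
end

section
/- Let H(D_x,D_y,D_z,D_t) = D_y D_t + 3D_x D_z − D_x³ D_y − 3u₀ D_x² + c. Suppose ϑ(ξ,τ) = Σ_{n∈ℤ} e^{πin²τ+2πinξ} with ξ = αx + ρy + kz + ωt + δ, Im τ > 0, and the two equations Σ_{n∈ℤ}(−16π²n²ρω − 48π²n²αk − 256π⁴n⁴ρα³ + 48u₀π²n²α² + c) e^{2πin²τ} = 0 and Σ_{n∈ℤ}(−4π²(2n−1)²ρω − 12π²(2n−1)²αk − 16π⁴(2n−1)⁴ρα³ + 12π²u₀(2n−1)²α² + c) e^{(2n²−2n+1)πiτ} = 0 hold. Then H(D_x,D_y,D_z,D_t) ϑ(ξ,τ)·ϑ(ξ,τ)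 = 0. -/
open Complex

noncomputable def tm (τ : ℂ) (m : ℕ) : ℂ → ℂ := fun ξ => ∑' n : ℤ,
  (2 * (Real.pi : ℂ) * Complex.I * (n : ℂ)) ^ m *
    Complex.exp ((Real.pi : ℂ) * Complex.I * (n : ℂ) ^ 2 * τ
      + 2 * (Real.pi : ℂ) * Complex.I * (n : ℂ) * ξ)

lemma term_eq (n : ℤ) (τ ξ : ℂ) :
    Complex.exp ((Real.pi : ℂ) * Complex.I * (n : ℂ) ^ 2 * τ
      + 2 * (Real.pi : ℂ) * Complex.I * (n : ℂ) * ξ) = jacobiTheta₂_term n ξ τ := by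
  rw [jacobiTheta₂_term, add_comm]

lemma norm_w_pow (n : ℤ) (m : ℕ) :
    ‖(2 * (Real.pi : ℂ) * Complex.I * (n : ℂ)) ^ m‖ = (2 * Real.pi) ^ m * ((|n| : ℤ) : ℝ) ^ m := by
  rw [norm_pow, ← mul_pow]
  congr 1
  simp only [norm_mul, Complex.norm_two, Complex.norm_I, Complex.norm_real, Real.norm_eq_abs,
    Complex.norm_intCast, _root_.abs_of_nonneg Real.pi_pos.le, mul_one]
  push_cast
  ring

lemma norm_term_le {S : ℝ} (τ : ℂ) (hτ : 0 < τ.im) (m : ℕ) {z : ℂ} (hz : |z.im| ≤ S) (n : ℤ) :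
    ‖(2 * (Real.pi : ℂ) * Complex.I * (n : ℂ)) ^ m *
      Complex.exp ((Real.pi : ℂ) * Complex.I * (n : ℂ) ^ 2 * τ
        + 2 * (Real.pi : ℂ) * Complex.I * (n : ℂ) * z)‖
      ≤ (2 * Real.pi) ^ m * (((|n| : ℤ) : ℝ) ^ m *
          Real.exp (-Real.pi * (τ.im * (n : ℝ) ^ 2 - 2 * S * ((|n| : ℤ) : ℝ)))) := by
  rw [term_eq, norm_mul, norm_w_pow, mul_assoc]
  refine mul_le_mul_of_nonneg_left ?_ (by positivity)
  exact mul_le_mul_of_nonneg_left (norm_jacobiTheta₂_term_le hτ hz le_rfl n) (by positivity)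

lemma summable_bound (S : ℝ) {τ : ℂ} (hτ : 0 < τ.im) (m : ℕ) :
    Summable (fun n : ℤ => (2 * Real.pi) ^ m * (((|n| : ℤ) : ℝ) ^ m *
      Real.exp (-Real.pi * (τ.im * (n : ℝ) ^ 2 - 2 * S * ((|n| : ℤ) : ℝ))))) := by
  exact (summable_pow_mul_jacobiTheta₂_term_bound S hτ m).mul_left _

lemma summable_norm_term {τ : ℂ} (hτ : 0 < τ.im) (m : ℕ) (ξ : ℂ) :
    Summable (fun n : ℤ => ‖(2 * (Real.pi : ℂ) * Complex.I * (n : ℂ)) ^ m *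
      Complex.exp ((Real.pi : ℂ) * Complex.I * (n : ℂ) ^ 2 * τ
        + 2 * (Real.pi : ℂ) * Complex.I * (n : ℂ) * ξ)‖) :=
  Summable.of_nonneg_of_le (fun _ => norm_nonneg _)
    (fun n => norm_term_le τ hτ m le_rfl n) (summable_bound |ξ.im| hτ m)

lemma tm_hasSum {τ : ℂ} (hτ : 0 < τ.im) (m : ℕ) (ξ : ℂ) :
    HasSum (fun n : ℤ => (2 * (Real.pi : ℂ) * Complex.I * (n : ℂ)) ^ m *
      Complex.exp ((Real.pi : ℂ) * Complex.I * (n : ℂ) ^ 2 * τ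
        + 2 * (Real.pi : ℂ) * Complex.I * (n : ℂ) * ξ)) (tm τ m ξ) :=
  (summable_norm_term hτ m ξ).of_norm.hasSum

lemma tm_hasDerivAt (τ : ℂ) (hτ : 0 < τ.im) (m : ℕ) (ξ : ℂ) :
    HasDerivAt (tm τ m) (tm τ (m + 1) ξ) ξ := by
  set S : ℝ := |ξ.im| + 1 with hS
  have hst : IsOpen (Complex.im ⁻¹' Metric.ball (0 : ℝ) S) :=
    Metric.isOpen_ball.preimage Complex.continuous_im
  have hconv : Convex ℝ (Complex.im ⁻¹' Metric.ball (0 : ℝ) S) :=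
    (convex_ball (0 : ℝ) S).linear_preimage Complex.imLm
  have hmem : ∀ z : ℂ, z ∈ Complex.im ⁻¹' Metric.ball (0 : ℝ) S ↔ |z.im| < S := by
    intro z; simp [Metric.mem_ball, Real.dist_eq]
  have hξ : ξ ∈ Complex.im ⁻¹' Metric.ball (0 : ℝ) S := by
    rw [hmem]; simp [hS]
  apply hasDerivAt_tsum_of_isPreconnected (summable_bound S hτ (m + 1)) hst
      hconv.isPreconnected
      (g := fun (n : ℤ) (z : ℂ) => (2 * (Real.pi : ℂ) * Complex.I * (n : ℂ)) ^ m *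
        Complex.exp ((Real.pi : ℂ) * Complex.I * (n : ℂ) ^ 2 * τ
          + 2 * (Real.pi : ℂ) * Complex.I * (n : ℂ) * z))
      (g' := fun (n : ℤ) (z : ℂ) => (2 * (Real.pi : ℂ) * Complex.I * (n : ℂ)) ^ (m + 1) *
        Complex.exp ((Real.pi : ℂ) * Complex.I * (n : ℂ) ^ 2 * τ
          + 2 * (Real.pi : ℂ) * Complex.I * (n : ℂ) * z)) ?_ ?_ hξ ?_ hξ
  · intro n z _
    have hin : HasDerivAt (fun w : ℂ => (Real.pi : ℂ) * Complex.I * (n : ℂ) ^ 2 * τ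
        + 2 * (Real.pi : ℂ) * Complex.I * (n : ℂ) * w)
        (2 * (Real.pi : ℂ) * Complex.I * (n : ℂ)) z := by
      simpa using ((hasDerivAt_id z).const_mul
        (2 * (Real.pi : ℂ) * Complex.I * (n : ℂ))).const_add
        ((Real.pi : ℂ) * Complex.I * (n : ℂ) ^ 2 * τ)
    have := (hin.cexp).const_mul ((2 * (Real.pi : ℂ) * Complex.I * (n : ℂ)) ^ m)
    have heq : (2 * (Real.pi : ℂ) * Complex.I * (n : ℂ)) ^ m *
        (Complex.exp ((Real.pi : ℂ) * Complex.I * (n : ℂ) ^ 2 * τ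
          + 2 * (Real.pi : ℂ) * Complex.I * (n : ℂ) * z) *
          (2 * (Real.pi : ℂ) * Complex.I * (n : ℂ)))
        = (2 * (Real.pi : ℂ) * Complex.I * (n : ℂ)) ^ (m + 1) *
        Complex.exp ((Real.pi : ℂ) * Complex.I * (n : ℂ) ^ 2 * τ
          + 2 * (Real.pi : ℂ) * Complex.I * (n : ℂ) * z) := by ring
    exact this.congr_deriv heq
  · intro n z hz
    rw [hmem] at hz
    exact norm_term_le τ hτ (m + 1) hz.le n
  · exact (summable_norm_term hτ m ξ).of_norm

-- part 2 scaffold (will be appended after part 1)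
noncomputable def comb (τ α ρ k ω δ : ℂ) (l : List (ℂ × ℕ × ℕ)) :
    ℂ → ℂ → ℂ → ℂ → ℂ → ℂ → ℂ → ℂ → ℂ :=
  fun x y z t x' y' z' t' =>
    (l.map fun p => p.1 * tm τ p.2.1 (α * x + ρ * y + k * z + ω * t + δ)
      * tm τ p.2.2 (α * x' + ρ * y' + k * z' + ω * t' + δ)).sum

def step (β : ℂ) (l : List (ℂ × ℕ × ℕ)) : List (ℂ × ℕ × ℕ) :=
  (l.map fun p => (p.1 * β, p.2.1 + 1, p.2.2)) ++ (l.map fun p => (-(p.1 * β), p.2.1, p.2.2 + 1))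

lemma hasDerivAt_listSum {ι : Type*} (l : List ι) (f : ι → ℂ → ℂ) (f' : ι → ℂ) {s : ℂ}
    (h : ∀ p ∈ l, HasDerivAt (f p) (f' p) s) :
    HasDerivAt (fun z => (l.map (fun p => f p z)).sum) ((l.map f').sum) s := by
  induction l with
  | nil => simpa using hasDerivAt_const s (0 : ℂ)
  | cons a l ih =>
    simp only [List.map_cons, List.sum_cons]
    exact (h a List.mem_cons_self).add (ih fun p hp => h p (List.mem_cons_of_mem a hp))

lemma list_map_sum_neg {ι : Type*} (l : List ι) (f : ι → ℂ) :
    (l.map fun p => -f p).sum = -(l.map f).sum := by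
  induction l with
  | nil => simp
  | cons a l ih => simp [ih]; ring

lemma Dx_comb (τ α ρ k ω δ : ℂ) (hτ : 0 < τ.im) (l : List (ℂ × ℕ × ℕ)) :
    Dx (comb τ α ρ k ω δ l) = comb τ α ρ k ω δ (step α l) := by
  funext x y z t x' y' z' t'
  have hu : HasDerivAt (fun s => comb τ α ρ k ω δ l s y z t x' y' z' t')
      ((l.map fun p : ℂ × ℕ × ℕ => p.1 * (tm τ (p.2.1 + 1) (α * x + ρ * y + k * z + ω * t + δ)
          * (α * 1)) * tm τ p.2.2 (α * x' + ρ * y' + k * z' + ω * t' + δ)).sum) x := by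
    simp only [comb]
    apply hasDerivAt_listSum
    intro p hp
    have hin : HasDerivAt (fun s : ℂ => α * s + ρ * y + k * z + ω * t + δ) (α * 1) x :=
      ((((hasDerivAt_id x).const_mul α).add_const (ρ * y)).add_const (k * z)
        |>.add_const (ω * t)).add_const δ
    exact (((tm_hasDerivAt τ hτ p.2.1 _).comp x hin).const_mul p.1).mul_const _
  have hv : HasDerivAt (fun s => comb τ α ρ k ω δ l x y z t s y' z' t')
      ((l.map fun p : ℂ × ℕ × ℕ => p.1 * tm τ p.2.1 (α * x + ρ * y + k * z + ω * t + δ)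
          * (tm τ (p.2.2 + 1) (α * x' + ρ * y' + k * z' + ω * t' + δ) * (α * 1))).sum) x' := by
    simp only [comb]
    apply hasDerivAt_listSum
    intro p hp
    have hin : HasDerivAt (fun s : ℂ => α * s + ρ * y' + k * z' + ω * t' + δ) (α * 1) x' :=
      ((((hasDerivAt_id x').const_mul α).add_const (ρ * y')).add_const (k * z')
        |>.add_const (ω * t')).add_const δ
    exact ((tm_hasDerivAt τ hτ p.2.2 _).comp x' hin).const_mul _
  show deriv _ x - deriv _ x' = _
  rw [hu.deriv, hv.deriv]
  simp only [comb, step, List.map_append, List.sum_append, List.map_map]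
  rw [show ((l.map ((fun p : ℂ × ℕ × ℕ => p.1 * tm τ p.2.1 (α * x + ρ * y + k * z + ω * t + δ)
      * tm τ p.2.2 (α * x' + ρ * y' + k * z' + ω * t' + δ)) ∘
      (fun p : ℂ × ℕ × ℕ => (p.1 * α, p.2.1 + 1, p.2.2)))).sum)
      = (l.map fun p : ℂ × ℕ × ℕ => p.1 * (tm τ (p.2.1 + 1) (α * x + ρ * y + k * z + ω * t + δ)
          * (α * 1)) * tm τ p.2.2 (α * x' + ρ * y' + k * z' + ω * t' + δ)).sum
    from by
      refine congrArg List.sum (List.map_congr_left fun p _ => ?_)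
      simp only [Function.comp_apply]; ring]
  rw [show ((l.map ((fun p : ℂ × ℕ × ℕ => p.1 * tm τ p.2.1 (α * x + ρ * y + k * z + ω * t + δ)
      * tm τ p.2.2 (α * x' + ρ * y' + k * z' + ω * t' + δ)) ∘
      (fun p : ℂ × ℕ × ℕ => (-(p.1 * α), p.2.1, p.2.2 + 1)))).sum)
      = -(l.map fun p : ℂ × ℕ × ℕ => p.1 * tm τ p.2.1 (α * x + ρ * y + k * z + ω * t + δ)
          * (tm τ (p.2.2 + 1) (α * x' + ρ * y' + k * z' + ω * t' + δ) * (α * 1))).sum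
    from by
      rw [← list_map_sum_neg]
      refine congrArg List.sum (List.map_congr_left fun p _ => ?_)
      simp only [Function.comp_apply]; ring]
  ring


lemma Dy_comb (τ α ρ k ω δ : ℂ) (hτ : 0 < τ.im) (l : List (ℂ × ℕ × ℕ)) :
    Dy (comb τ α ρ k ω δ l) = comb τ α ρ k ω δ (step ρ l) := by
  funext x y z t x' y' z' t'
  have hu : HasDerivAt (fun s => comb τ α ρ k ω δ l x s z t x' y' z' t')
      ((l.map fun p : ℂ × ℕ × ℕ => p.1 * (tm τ (p.2.1 + 1) (α * x + ρ * y + k * z + ω * t + δ)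
          * (ρ * 1)) * tm τ p.2.2 (α * x' + ρ * y' + k * z' + ω * t' + δ)).sum) y := by
    simp only [comb]
    apply hasDerivAt_listSum
    intro p hp
    have hin : HasDerivAt (fun s : ℂ => α * x + ρ * s + k * z + ω * t + δ) (ρ * 1) y := ((((hasDerivAt_id y).const_mul ρ).const_add (α * x)).add_const (k * z)
        |>.add_const (ω * t)).add_const δ
    exact (((tm_hasDerivAt τ hτ p.2.1 _).comp y hin).const_mul p.1).mul_const _
  have hv : HasDerivAt (fun s => comb τ α ρ k ω δ l x y z t x' s z' t')
      ((l.map fun p : ℂ × ℕ × ℕ => p.1 * tm τ p.2.1 (α * x + ρ * y + k * z + ω * t + δ)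
          * (tm τ (p.2.2 + 1) (α * x' + ρ * y' + k * z' + ω * t' + δ) * (ρ * 1))).sum) y' := by
    simp only [comb]
    apply hasDerivAt_listSum
    intro p hp
    have hin : HasDerivAt (fun s : ℂ => α * x' + ρ * s + k * z' + ω * t' + δ) (ρ * 1) y' := ((((hasDerivAt_id y').const_mul ρ).const_add (α * x')).add_const (k * z')
        |>.add_const (ω * t')).add_const δ
    exact ((tm_hasDerivAt τ hτ p.2.2 _).comp y' hin).const_mul _
  show deriv _ y - deriv _ y' = _
  rw [hu.deriv, hv.deriv]
  simp only [comb, step, List.map_append, List.sum_append, List.map_map]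
  rw [show ((l.map ((fun p : ℂ × ℕ × ℕ => p.1 * tm τ p.2.1 (α * x + ρ * y + k * z + ω * t + δ)
      * tm τ p.2.2 (α * x' + ρ * y' + k * z' + ω * t' + δ)) ∘
      (fun p : ℂ × ℕ × ℕ => (p.1 * ρ, p.2.1 + 1, p.2.2)))).sum)
      = (l.map fun p : ℂ × ℕ × ℕ => p.1 * (tm τ (p.2.1 + 1) (α * x + ρ * y + k * z + ω * t + δ)
          * (ρ * 1)) * tm τ p.2.2 (α * x' + ρ * y' + k * z' + ω * t' + δ)).sum
    from by
      refine congrArg List.sum (List.map_congr_left fun p _ => ?_)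
      simp only [Function.comp_apply]; ring]
  rw [show ((l.map ((fun p : ℂ × ℕ × ℕ => p.1 * tm τ p.2.1 (α * x + ρ * y + k * z + ω * t + δ)
      * tm τ p.2.2 (α * x' + ρ * y' + k * z' + ω * t' + δ)) ∘
      (fun p : ℂ × ℕ × ℕ => (-(p.1 * ρ), p.2.1, p.2.2 + 1)))).sum)
      = -(l.map fun p : ℂ × ℕ × ℕ => p.1 * tm τ p.2.1 (α * x + ρ * y + k * z + ω * t + δ)
          * (tm τ (p.2.2 + 1) (α * x' + ρ * y' + k * z' + ω * t' + δ) * (ρ * 1))).sum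
    from by
      rw [← list_map_sum_neg]
      refine congrArg List.sum (List.map_congr_left fun p _ => ?_)
      simp only [Function.comp_apply]; ring]
  ring

lemma Dz_comb (τ α ρ k ω δ : ℂ) (hτ : 0 < τ.im) (l : List (ℂ × ℕ × ℕ)) :
    Dz (comb τ α ρ k ω δ l) = comb τ α ρ k ω δ (step k l) := by
  funext x y z t x' y' z' t'
  have hu : HasDerivAt (fun s => comb τ α ρ k ω δ l x y s t x' y' z' t')
      ((l.map fun p : ℂ × ℕ × ℕ => p.1 * (tm τ (p.2.1 + 1) (α * x + ρ * y + k * z + ω * t + δ)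
          * (k * 1)) * tm τ p.2.2 (α * x' + ρ * y' + k * z' + ω * t' + δ)).sum) z := by
    simp only [comb]
    apply hasDerivAt_listSum
    intro p hp
    have hin : HasDerivAt (fun s : ℂ => α * x + ρ * y + k * s + ω * t + δ) (k * 1) z := ((((hasDerivAt_id z).const_mul k).const_add (α * x + ρ * y)).add_const (ω * t)).add_const δ
    exact (((tm_hasDerivAt τ hτ p.2.1 _).comp z hin).const_mul p.1).mul_const _
  have hv : HasDerivAt (fun s => comb τ α ρ k ω δ l x y z t x' y' s t')
      ((l.map fun p : ℂ × ℕ × ℕ => p.1 * tm τ p.2.1 (α * x + ρ * y + k * z + ω * t + δ)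
          * (tm τ (p.2.2 + 1) (α * x' + ρ * y' + k * z' + ω * t' + δ) * (k * 1))).sum) z' := by
    simp only [comb]
    apply hasDerivAt_listSum
    intro p hp
    have hin : HasDerivAt (fun s : ℂ => α * x' + ρ * y' + k * s + ω * t' + δ) (k * 1) z' := ((((hasDerivAt_id z').const_mul k).const_add (α * x' + ρ * y')).add_const (ω * t')).add_const δ
    exact ((tm_hasDerivAt τ hτ p.2.2 _).comp z' hin).const_mul _
  show deriv _ z - deriv _ z' = _
  rw [hu.deriv, hv.deriv]
  simp only [comb, step, List.map_append, List.sum_append, List.map_map]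
  rw [show ((l.map ((fun p : ℂ × ℕ × ℕ => p.1 * tm τ p.2.1 (α * x + ρ * y + k * z + ω * t + δ)
      * tm τ p.2.2 (α * x' + ρ * y' + k * z' + ω * t' + δ)) ∘
      (fun p : ℂ × ℕ × ℕ => (p.1 * k, p.2.1 + 1, p.2.2)))).sum)
      = (l.map fun p : ℂ × ℕ × ℕ => p.1 * (tm τ (p.2.1 + 1) (α * x + ρ * y + k * z + ω * t + δ)
          * (k * 1)) * tm τ p.2.2 (α * x' + ρ * y' + k * z' + ω * t' + δ)).sum
    from by
      refine congrArg List.sum (List.map_congr_left fun p _ => ?_)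
      simp only [Function.comp_apply]; ring]
  rw [show ((l.map ((fun p : ℂ × ℕ × ℕ => p.1 * tm τ p.2.1 (α * x + ρ * y + k * z + ω * t + δ)
      * tm τ p.2.2 (α * x' + ρ * y' + k * z' + ω * t' + δ)) ∘
      (fun p : ℂ × ℕ × ℕ => (-(p.1 * k), p.2.1, p.2.2 + 1)))).sum)
      = -(l.map fun p : ℂ × ℕ × ℕ => p.1 * tm τ p.2.1 (α * x + ρ * y + k * z + ω * t + δ)
          * (tm τ (p.2.2 + 1) (α * x' + ρ * y' + k * z' + ω * t' + δ) * (k * 1))).sum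
    from by
      rw [← list_map_sum_neg]
      refine congrArg List.sum (List.map_congr_left fun p _ => ?_)
      simp only [Function.comp_apply]; ring]
  ring

lemma Dt_comb (τ α ρ k ω δ : ℂ) (hτ : 0 < τ.im) (l : List (ℂ × ℕ × ℕ)) :
    Dt (comb τ α ρ k ω δ l) = comb τ α ρ k ω δ (step ω l) := by
  funext x y z t x' y' z' t'
  have hu : HasDerivAt (fun s => comb τ α ρ k ω δ l x y z s x' y' z' t')
      ((l.map fun p : ℂ × ℕ × ℕ => p.1 * (tm τ (p.2.1 + 1) (α * x + ρ * y + k * z + ω * t + δ)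
          * (ω * 1)) * tm τ p.2.2 (α * x' + ρ * y' + k * z' + ω * t' + δ)).sum) t := by
    simp only [comb]
    apply hasDerivAt_listSum
    intro p hp
    have hin : HasDerivAt (fun s : ℂ => α * x + ρ * y + k * z + ω * s + δ) (ω * 1) t := (((hasDerivAt_id t).const_mul ω).const_add (α * x + ρ * y + k * z)).add_const δ
    exact (((tm_hasDerivAt τ hτ p.2.1 _).comp t hin).const_mul p.1).mul_const _
  have hv : HasDerivAt (fun s => comb τ α ρ k ω δ l x y z t x' y' z' s)
      ((l.map fun p : ℂ × ℕ × ℕ => p.1 * tm τ p.2.1 (α * x + ρ * y + k * z + ω * t + δ)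
          * (tm τ (p.2.2 + 1) (α * x' + ρ * y' + k * z' + ω * t' + δ) * (ω * 1))).sum) t' := by
    simp only [comb]
    apply hasDerivAt_listSum
    intro p hp
    have hin : HasDerivAt (fun s : ℂ => α * x' + ρ * y' + k * z' + ω * s + δ) (ω * 1) t' := (((hasDerivAt_id t').const_mul ω).const_add (α * x' + ρ * y' + k * z')).add_const δ
    exact ((tm_hasDerivAt τ hτ p.2.2 _).comp t' hin).const_mul _
  show deriv _ t - deriv _ t' = _
  rw [hu.deriv, hv.deriv]
  simp only [comb, step, List.map_append, List.sum_append, List.map_map]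
  rw [show ((l.map ((fun p : ℂ × ℕ × ℕ => p.1 * tm τ p.2.1 (α * x + ρ * y + k * z + ω * t + δ)
      * tm τ p.2.2 (α * x' + ρ * y' + k * z' + ω * t' + δ)) ∘
      (fun p : ℂ × ℕ × ℕ => (p.1 * ω, p.2.1 + 1, p.2.2)))).sum)
      = (l.map fun p : ℂ × ℕ × ℕ => p.1 * (tm τ (p.2.1 + 1) (α * x + ρ * y + k * z + ω * t + δ)
          * (ω * 1)) * tm τ p.2.2 (α * x' + ρ * y' + k * z' + ω * t' + δ)).sum
    from by
      refine congrArg List.sum (List.map_congr_left fun p _ => ?_)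
      simp only [Function.comp_apply]; ring]
  rw [show ((l.map ((fun p : ℂ × ℕ × ℕ => p.1 * tm τ p.2.1 (α * x + ρ * y + k * z + ω * t + δ)
      * tm τ p.2.2 (α * x' + ρ * y' + k * z' + ω * t' + δ)) ∘
      (fun p : ℂ × ℕ × ℕ => (-(p.1 * ω), p.2.1, p.2.2 + 1)))).sum)
      = -(l.map fun p : ℂ × ℕ × ℕ => p.1 * tm τ p.2.1 (α * x + ρ * y + k * z + ω * t + δ)
          * (tm τ (p.2.2 + 1) (α * x' + ρ * y' + k * z' + ω * t' + δ) * (ω * 1))).sum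
    from by
      rw [← list_map_sum_neg]
      refine congrArg List.sum (List.map_congr_left fun p _ => ?_)
      simp only [Function.comp_apply]; ring]
  ring

noncomputable def Ee (τ ξ : ℂ) (n : ℤ) : ℂ :=
  Complex.exp ((Real.pi : ℂ) * Complex.I * (n : ℂ) ^ 2 * τ
    + 2 * (Real.pi : ℂ) * Complex.I * (n : ℂ) * ξ)

noncomputable def wc (n : ℤ) : ℂ := 2 * (Real.pi : ℂ) * Complex.I * (n : ℂ)

noncomputable def Csym (α ρ k ω u₀ c : ℂ) (p : ℤ × ℤ) : ℂ :=
  (ρ * ω + 3 * α * k - 3 * u₀ * α ^ 2) * (wc p.1 - wc p.2) ^ 2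
    - ρ * α ^ 3 * (wc p.1 - wc p.2) ^ 4 + c

def shear : ℤ × ℤ ≃ ℤ × ℤ where
  toFun p := (p.2, p.1 - p.2)
  invFun p := (p.1 + p.2, p.1)
  left_inv p := by simp
  right_inv p := by simp

lemma keyI (α ρ k ω u₀ c : ℂ) (d : ℂ) :
    (ρ * ω + 3 * α * k - 3 * u₀ * α ^ 2) * (2 * (Real.pi : ℂ) * Complex.I * d) ^ 2
      - ρ * α ^ 3 * (2 * (Real.pi : ℂ) * Complex.I * d) ^ 4 + c
    = -4 * (Real.pi : ℂ) ^ 2 * d ^ 2 * ρ * ω - 12 * (Real.pi : ℂ) ^ 2 * d ^ 2 * α * k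
      - 16 * (Real.pi : ℂ) ^ 4 * d ^ 4 * ρ * α ^ 3
      + 12 * (Real.pi : ℂ) ^ 2 * u₀ * d ^ 2 * α ^ 2 + c := by
  linear_combination (4 * (Real.pi : ℂ) ^ 2 * d ^ 2 * (ρ * ω + 3 * α * k - 3 * u₀ * α ^ 2)
    + 16 * (Real.pi : ℂ) ^ 4 * d ^ 4 * ρ * α ^ 3 * (1 - Complex.I ^ 2)) * Complex.I_sq

lemma keyId (τ α ρ k ω u₀ c : ℂ) (hτ : 0 < τ.im)
    (h0 : ∑' n : ℤ,
      (-16 * (Real.pi : ℂ) ^ 2 * (n : ℂ) ^ 2 * ρ * ω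
        - 48 * (Real.pi : ℂ) ^ 2 * (n : ℂ) ^ 2 * α * k
        - 256 * (Real.pi : ℂ) ^ 4 * (n : ℂ) ^ 4 * ρ * α ^ 3
        + 48 * u₀ * (Real.pi : ℂ) ^ 2 * (n : ℂ) ^ 2 * α ^ 2 + c) *
      Complex.exp (2 * Real.pi * Complex.I * (n : ℂ) ^ 2 * τ) = 0)
    (h1 : ∑' n : ℤ,
      (-4 * (Real.pi : ℂ) ^ 2 * (2 * (n : ℂ) - 1) ^ 2 * ρ * ω
        - 12 * (Real.pi : ℂ) ^ 2 * (2 * (n : ℂ) - 1) ^ 2 * α * k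
        - 16 * (Real.pi : ℂ) ^ 4 * (2 * (n : ℂ) - 1) ^ 4 * ρ * α ^ 3
        + 12 * (Real.pi : ℂ) ^ 2 * u₀ * (2 * (n : ℂ) - 1) ^ 2 * α ^ 2 + c) *
      Complex.exp ((2 * (n : ℂ) ^ 2 - 2 * (n : ℂ) + 1) * Real.pi * Complex.I * τ) = 0)
    (ξ : ℂ) :
    (ρ * ω + 3 * α * k - 3 * u₀ * α ^ 2)
        * (2 * (tm τ 2 ξ * tm τ 0 ξ) - 2 * (tm τ 1 ξ * tm τ 1 ξ))
      - ρ * α ^ 3 * (2 * (tm τ 4 ξ * tm τ 0 ξ) - 8 * (tm τ 3 ξ * tm τ 1 ξ)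
        + 6 * (tm τ 2 ξ * tm τ 2 ξ))
      + c * (tm τ 0 ξ * tm τ 0 ξ) = 0 := by
  have hA : ∀ m : ℕ, Summable (fun n : ℤ => ‖wc n ^ m * Ee τ ξ n‖) :=
    fun m => summable_norm_term hτ m ξ
  have tm_eq : ∀ m : ℕ, tm τ m ξ = ∑' n : ℤ, wc n ^ m * Ee τ ξ n := fun m => rfl
  have hProd : ∀ a b : ℕ, HasSum (fun p : ℤ × ℤ =>
      (wc p.1 ^ a * Ee τ ξ p.1) * (wc p.2 ^ b * Ee τ ξ p.2)) (tm τ a ξ * tm τ b ξ) := by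
    intro a b
    have hs := summable_mul_of_summable_norm (hA a) (hA b)
    have := hs.hasSum
    rwa [← tsum_mul_tsum_of_summable_norm (hA a) (hA b), ← tm_eq, ← tm_eq] at this
  set Bc : ℂ := ρ * ω + 3 * α * k - 3 * u₀ * α ^ 2 with hBc
  have combo := ((((((((((hProd 2 0).mul_left Bc).add ((hProd 0 2).mul_left Bc)).sub
      ((hProd 1 1).mul_left (2 * Bc))).sub ((hProd 4 0).mul_left (ρ * α ^ 3))).sub
      ((hProd 0 4).mul_left (ρ * α ^ 3))).add ((hProd 3 1).mul_left (4 * ρ * α ^ 3))).add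
      ((hProd 1 3).mul_left (4 * ρ * α ^ 3))).sub ((hProd 2 2).mul_left (6 * ρ * α ^ 3))).add
      ((hProd 0 0).mul_left c))
  have hfun : (fun p : ℤ × ℤ =>
      Bc * ((wc p.1 ^ 2 * Ee τ ξ p.1) * (wc p.2 ^ 0 * Ee τ ξ p.2))
        + Bc * ((wc p.1 ^ 0 * Ee τ ξ p.1) * (wc p.2 ^ 2 * Ee τ ξ p.2))
        - 2 * Bc * ((wc p.1 ^ 1 * Ee τ ξ p.1) * (wc p.2 ^ 1 * Ee τ ξ p.2))
        - ρ * α ^ 3 * ((wc p.1 ^ 4 * Ee τ ξ p.1) * (wc p.2 ^ 0 * Ee τ ξ p.2))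
        - ρ * α ^ 3 * ((wc p.1 ^ 0 * Ee τ ξ p.1) * (wc p.2 ^ 4 * Ee τ ξ p.2))
        + 4 * ρ * α ^ 3 * ((wc p.1 ^ 3 * Ee τ ξ p.1) * (wc p.2 ^ 1 * Ee τ ξ p.2))
        + 4 * ρ * α ^ 3 * ((wc p.1 ^ 1 * Ee τ ξ p.1) * (wc p.2 ^ 3 * Ee τ ξ p.2))
        - 6 * ρ * α ^ 3 * ((wc p.1 ^ 2 * Ee τ ξ p.1) * (wc p.2 ^ 2 * Ee τ ξ p.2))
        + c * ((wc p.1 ^ 0 * Ee τ ξ p.1) * (wc p.2 ^ 0 * Ee τ ξ p.2)))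
      = (fun p : ℤ × ℤ => Csym α ρ k ω u₀ c p * (Ee τ ξ p.1 * Ee τ ξ p.2)) := by
    funext p
    simp only [Csym]
    ring
  rw [hfun] at combo
  have hL : Bc * (2 * (tm τ 2 ξ * tm τ 0 ξ) - 2 * (tm τ 1 ξ * tm τ 1 ξ))
      - ρ * α ^ 3 * (2 * (tm τ 4 ξ * tm τ 0 ξ) - 8 * (tm τ 3 ξ * tm τ 1 ξ)
        + 6 * (tm τ 2 ξ * tm τ 2 ξ)) + c * (tm τ 0 ξ * tm τ 0 ξ)
      = Bc * (tm τ 2 ξ * tm τ 0 ξ) + Bc * (tm τ 0 ξ * tm τ 2 ξ)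
        - 2 * Bc * (tm τ 1 ξ * tm τ 1 ξ)
        - ρ * α ^ 3 * (tm τ 4 ξ * tm τ 0 ξ) - ρ * α ^ 3 * (tm τ 0 ξ * tm τ 4 ξ)
        + 4 * ρ * α ^ 3 * (tm τ 3 ξ * tm τ 1 ξ) + 4 * ρ * α ^ 3 * (tm τ 1 ξ * tm τ 3 ξ)
        - 6 * ρ * α ^ 3 * (tm τ 2 ξ * tm τ 2 ξ) + c * (tm τ 0 ξ * tm τ 0 ξ) := by
    ring
  rw [hL, ← combo.tsum_eq]
  -- now show the double sum vanishes
  rw [← shear.tsum_eq]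
  have hsummable : Summable (fun p : ℤ × ℤ =>
      Csym α ρ k ω u₀ c (shear p) * (Ee τ ξ (shear p).1 * Ee τ ξ (shear p).2)) :=
    (shear.summable_iff).mpr combo.summable
  rw [hsummable.tsum_prod]
  simp only [shear, Equiv.coe_fn_mk]
  have hq : ∀ q : ℤ, ∑' n : ℤ,
      Csym α ρ k ω u₀ c (n, q - n) * (Ee τ ξ n * Ee τ ξ (q - n)) = 0 := by
    intro q
    rcases Int.even_or_odd q with ⟨r, hr⟩ | ⟨r, hr⟩
    · subst hr
      rw [← (Equiv.addRight r).tsum_eq]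
      have hterm : ∀ n : ℤ,
          Csym α ρ k ω u₀ c (n + r, r + r - (n + r))
            * (Ee τ ξ (n + r) * Ee τ ξ (r + r - (n + r)))
          = ((-16 * (Real.pi : ℂ) ^ 2 * (n : ℂ) ^ 2 * ρ * ω
              - 48 * (Real.pi : ℂ) ^ 2 * (n : ℂ) ^ 2 * α * k
              - 256 * (Real.pi : ℂ) ^ 4 * (n : ℂ) ^ 4 * ρ * α ^ 3
              + 48 * u₀ * (Real.pi : ℂ) ^ 2 * (n : ℂ) ^ 2 * α ^ 2 + c) *
            Complex.exp (2 * Real.pi * Complex.I * (n : ℂ) ^ 2 * τ)) *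
            Complex.exp (2 * (Real.pi : ℂ) * Complex.I * (r : ℂ) ^ 2 * τ
              + 2 * (Real.pi : ℂ) * Complex.I * ((r : ℂ) + (r : ℂ)) * ξ) := by
        intro n
        have hE : Ee τ ξ (n + r) * Ee τ ξ (r + r - (n + r))
            = Complex.exp (2 * Real.pi * Complex.I * (n : ℂ) ^ 2 * τ) *
              Complex.exp (2 * (Real.pi : ℂ) * Complex.I * (r : ℂ) ^ 2 * τ
                + 2 * (Real.pi : ℂ) * Complex.I * ((r : ℂ) + (r : ℂ)) * ξ) := by
          simp only [Ee]
          rw [← Complex.exp_add, ← Complex.exp_add]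
          congr 1
          push_cast
          ring
        have hC : Csym α ρ k ω u₀ c (n + r, r + r - (n + r))
            = -16 * (Real.pi : ℂ) ^ 2 * (n : ℂ) ^ 2 * ρ * ω
              - 48 * (Real.pi : ℂ) ^ 2 * (n : ℂ) ^ 2 * α * k
              - 256 * (Real.pi : ℂ) ^ 4 * (n : ℂ) ^ 4 * ρ * α ^ 3
              + 48 * u₀ * (Real.pi : ℂ) ^ 2 * (n : ℂ) ^ 2 * α ^ 2 + c := by
          simp only [Csym, wc]
          push_cast
          linear_combination keyI α ρ k ω u₀ c (2 * (n : ℂ))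
        rw [hC, hE]
        ring
      calc (∑' n : ℤ, Csym α ρ k ω u₀ c ((n + r), r + r - (n + r))
              * (Ee τ ξ (n + r) * Ee τ ξ (r + r - (n + r))))
          = ∑' n : ℤ, ((-16 * (Real.pi : ℂ) ^ 2 * (n : ℂ) ^ 2 * ρ * ω
              - 48 * (Real.pi : ℂ) ^ 2 * (n : ℂ) ^ 2 * α * k
              - 256 * (Real.pi : ℂ) ^ 4 * (n : ℂ) ^ 4 * ρ * α ^ 3
              + 48 * u₀ * (Real.pi : ℂ) ^ 2 * (n : ℂ) ^ 2 * α ^ 2 + c) *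
            Complex.exp (2 * Real.pi * Complex.I * (n : ℂ) ^ 2 * τ)) *
            Complex.exp (2 * (Real.pi : ℂ) * Complex.I * (r : ℂ) ^ 2 * τ
              + 2 * (Real.pi : ℂ) * Complex.I * ((r : ℂ) + (r : ℂ)) * ξ) := tsum_congr hterm
        _ = 0 := by rw [tsum_mul_right, h0, zero_mul]
    · subst hr
      rw [← (Equiv.addRight r).tsum_eq]
      have hterm : ∀ n : ℤ,
          Csym α ρ k ω u₀ c (n + r, 2 * r + 1 - (n + r))
            * (Ee τ ξ (n + r) * Ee τ ξ (2 * r + 1 - (n + r)))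
          = ((-4 * (Real.pi : ℂ) ^ 2 * (2 * (n : ℂ) - 1) ^ 2 * ρ * ω
              - 12 * (Real.pi : ℂ) ^ 2 * (2 * (n : ℂ) - 1) ^ 2 * α * k
              - 16 * (Real.pi : ℂ) ^ 4 * (2 * (n : ℂ) - 1) ^ 4 * ρ * α ^ 3
              + 12 * (Real.pi : ℂ) ^ 2 * u₀ * (2 * (n : ℂ) - 1) ^ 2 * α ^ 2 + c) *
            Complex.exp ((2 * (n : ℂ) ^ 2 - 2 * (n : ℂ) + 1) * Real.pi * Complex.I * τ)) *
            Complex.exp ((2 * (r : ℂ) ^ 2 + 2 * (r : ℂ)) * (Real.pi : ℂ) * Complex.I * τ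
              + 2 * (Real.pi : ℂ) * Complex.I * (2 * (r : ℂ) + 1) * ξ) := by
        intro n
        have hE : Ee τ ξ (n + r) * Ee τ ξ (2 * r + 1 - (n + r))
            = Complex.exp ((2 * (n : ℂ) ^ 2 - 2 * (n : ℂ) + 1) * Real.pi * Complex.I * τ) *
              Complex.exp ((2 * (r : ℂ) ^ 2 + 2 * (r : ℂ)) * (Real.pi : ℂ) * Complex.I * τ
                + 2 * (Real.pi : ℂ) * Complex.I * (2 * (r : ℂ) + 1) * ξ) := by
          simp only [Ee]
          rw [← Complex.exp_add, ← Complex.exp_add]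
          congr 1
          push_cast
          ring
        have hC : Csym α ρ k ω u₀ c (n + r, 2 * r + 1 - (n + r))
            = -4 * (Real.pi : ℂ) ^ 2 * (2 * (n : ℂ) - 1) ^ 2 * ρ * ω
              - 12 * (Real.pi : ℂ) ^ 2 * (2 * (n : ℂ) - 1) ^ 2 * α * k
              - 16 * (Real.pi : ℂ) ^ 4 * (2 * (n : ℂ) - 1) ^ 4 * ρ * α ^ 3
              + 12 * (Real.pi : ℂ) ^ 2 * u₀ * (2 * (n : ℂ) - 1) ^ 2 * α ^ 2 + c := by
          simp only [Csym, wc]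
          push_cast
          linear_combination keyI α ρ k ω u₀ c (2 * (n : ℂ) - 1)
        rw [hC, hE]
        ring
      calc (∑' n : ℤ, Csym α ρ k ω u₀ c ((n + r), 2 * r + 1 - (n + r))
              * (Ee τ ξ (n + r) * Ee τ ξ (2 * r + 1 - (n + r))))
          = ∑' n : ℤ, ((-4 * (Real.pi : ℂ) ^ 2 * (2 * (n : ℂ) - 1) ^ 2 * ρ * ω
              - 12 * (Real.pi : ℂ) ^ 2 * (2 * (n : ℂ) - 1) ^ 2 * α * k
              - 16 * (Real.pi : ℂ) ^ 4 * (2 * (n : ℂ) - 1) ^ 4 * ρ * α ^ 3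
              + 12 * (Real.pi : ℂ) ^ 2 * u₀ * (2 * (n : ℂ) - 1) ^ 2 * α ^ 2 + c) *
            Complex.exp ((2 * (n : ℂ) ^ 2 - 2 * (n : ℂ) + 1) * Real.pi * Complex.I * τ)) *
            Complex.exp ((2 * (r : ℂ) ^ 2 + 2 * (r : ℂ)) * (Real.pi : ℂ) * Complex.I * τ
              + 2 * (Real.pi : ℂ) * Complex.I * (2 * (r : ℂ) + 1) * ξ) := tsum_congr hterm
        _ = 0 := by rw [tsum_mul_right, h1, zero_mul]
  calc (∑' (q : ℤ), ∑' n : ℤ,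
        Csym α ρ k ω u₀ c (n, q - n) * (Ee τ ξ n * Ee τ ξ (q - n)))
      = ∑' (_ : ℤ), (0 : ℂ) := tsum_congr hq
    _ = 0 := tsum_zero

lemma iter3 {A : Type*} (f : A → A) : f^[3] = fun a => f (f (f a)) := by
  funext a; rfl

lemma iter2 {A : Type*} (f : A → A) : f^[2] = fun a => f (f a) := by
  funext a; rfl

/-- If `(α, ρ, k, ω, u₀, c)` satisfy the two series equations `H̃(0) = 0` and `H̃(1) = 0`,
then `(D_y D_t + 3D_x D_z - D_x³D_y - 3u₀D_x² + c) ϑ(ξ,τ)·ϑ(ξ,τ) = 0`. -/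
theorem one_periodic_bilinear (τ α ρ k ω δ u₀ c : ℂ) (hτ : 0 < τ.im)
    (θ : ℂ → ℂ → ℂ → ℂ → ℂ)
    (hθ : θ = fun x y z t => ∑' n : ℤ,
      Complex.exp (Real.pi * Complex.I * (n : ℂ) ^ 2 * τ
        + 2 * Real.pi * Complex.I * n * (α * x + ρ * y + k * z + ω * t + δ)))
    (h0 : ∑' n : ℤ,
      (-16 * (Real.pi : ℂ) ^ 2 * (n : ℂ) ^ 2 * ρ * ω
        - 48 * (Real.pi : ℂ) ^ 2 * (n : ℂ) ^ 2 * α * k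
        - 256 * (Real.pi : ℂ) ^ 4 * (n : ℂ) ^ 4 * ρ * α ^ 3
        + 48 * u₀ * (Real.pi : ℂ) ^ 2 * (n : ℂ) ^ 2 * α ^ 2 + c) *
      Complex.exp (2 * Real.pi * Complex.I * (n : ℂ) ^ 2 * τ) = 0)
    (h1 : ∑' n : ℤ,
      (-4 * (Real.pi : ℂ) ^ 2 * (2 * (n : ℂ) - 1) ^ 2 * ρ * ω
        - 12 * (Real.pi : ℂ) ^ 2 * (2 * (n : ℂ) - 1) ^ 2 * α * k
        - 16 * (Real.pi : ℂ) ^ 4 * (2 * (n : ℂ) - 1) ^ 4 * ρ * α ^ 3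
        + 12 * (Real.pi : ℂ) ^ 2 * u₀ * (2 * (n : ℂ) - 1) ^ 2 * α ^ 2 + c) *
      Complex.exp ((2 * (n : ℂ) ^ 2 - 2 * (n : ℂ) + 1) * Real.pi * Complex.I * τ) = 0) :
    ∀ x y z t : ℂ,
      hirota 0 1 0 1 θ θ x y z t + 3 * hirota 1 0 1 0 θ θ x y z t
        - hirota 3 1 0 0 θ θ x y z t - 3 * u₀ * hirota 2 0 0 0 θ θ x y z t
        + c * (θ x y z t) ^ 2 = 0 := by

  intro x y z t
  have hθ0 : θ = fun x y z t => tm τ 0 (α * x + ρ * y + k * z + ω * t + δ) := by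
    rw [hθ]
    funext a b e f
    exact (tsum_congr fun n => by rw [pow_zero, one_mul]).symm
  have hF : (fun x y z t x' y' z' t' => θ x y z t * θ x' y' z' t')
      = comb τ α ρ k ω δ [(1, 0, 0)] := by
    rw [hθ0]
    funext a b e f a' b' e' f'
    simp [comb]
  simp only [hirota]
  rw [hF, hθ0]
  simp only [iter3, iter2, Function.iterate_one, Function.iterate_zero, id_eq]
  simp only [Dt_comb τ α ρ k ω δ hτ, Dz_comb τ α ρ k ω δ hτ, Dy_comb τ α ρ k ω δ hτ,
    Dx_comb τ α ρ k ω δ hτ]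
  simp only [step, comb, List.map_cons, List.map_nil, List.map_append, List.sum_cons,
    List.sum_nil, List.sum_append, add_zero]
  norm_num
  linear_combination keyId τ α ρ k ω u₀ c hτ h0 h1 (α * x + ρ * y + k * z + ω * t + δ)
end
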